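/- Let ε > 0, δ(x₁) = ε + x₁², k(x) = x₂/δ(x₁), and define v₁³(x) = ψ₃(k+1/2) + ( 1 − 4x₁²/δ − 5x₂ k , 2x₁ k (2 − 4x₁²/δ − 3x₂ k) ) (k² − 1/4), where ψ₃ = (x₂, −x₁) and δ = δ(x₁). Then v₁³ is divergence free on the neck region {|x₂| < δ(x₁)/2}. -/

import Mathlib

/-- The auxiliary field `v₁³` (matching the rotation `ψ₃ = (x₂, -x₁)`) is
divergence free on the neck region; `k = x₂/δ`, `δ = ε + x₁²`. -/
theorem stmt15 (ε : ℝ) (hε : 0 < ε) (x₁ x₂ : ℝ)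
    (hx : |x₂| < (ε + x₁ ^ 2) / 2) :
    ∃ d₁ d₂ : ℝ,
      HasDerivAt (fun t =>
        x₂ * (x₂ / (ε + t ^ 2) + 1 / 2)
          + (1 - 4 * t ^ 2 / (ε + t ^ 2) - 5 * x₂ * (x₂ / (ε + t ^ 2)))
            * ((x₂ / (ε + t ^ 2)) ^ 2 - 1 / 4)) d₁ x₁ ∧
      HasDerivAt (fun t =>
        -x₁ * (t / (ε + x₁ ^ 2) + 1 / 2)
          + 2 * x₁ * (t / (ε + x₁ ^ 2))
            * (2 - 4 * x₁ ^ 2 / (ε + x₁ ^ 2) - 3 * t * (t / (ε + x₁ ^ 2)))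
            * ((t / (ε + x₁ ^ 2)) ^ 2 - 1 / 4)) d₂ x₂ ∧
      d₁ + d₂ = 0 := by
  have hδ : (ε + x₁ ^ 2) ≠ 0 := by positivity
  have hg : HasDerivAt (fun t : ℝ => ε + t ^ 2) (2 * x₁ ^ 1) x₁ := by
    simpa using (hasDerivAt_pow 2 x₁).const_add ε
  -- A t = x₂ / (ε + t²)
  have hA := (hasDerivAt_const x₁ x₂).div hg hδ
  have hB := ((hasDerivAt_pow 2 x₁).const_mul (4:ℝ)).div hg hδ
  have h1 := ((hA.add_const (1/2 : ℝ)).const_mul x₂).add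
    ((((hasDerivAt_const x₁ (1:ℝ)).sub hB).sub (hA.const_mul (5 * x₂))).mul
      ((hA.pow 2).sub_const (1/4 : ℝ)))
  -- second variable
  have hE := (hasDerivAt_id x₂).div_const (ε + x₁ ^ 2)
  have h2 := ((hE.add_const (1/2 : ℝ)).const_mul (-x₁)).add
    ((((hE.const_mul (2 * x₁)).mul
        (((hasDerivAt_const x₂ (2:ℝ)).sub ((hasDerivAt_const x₂ (4 * x₁ ^ 2)).div_const
            (ε + x₁ ^ 2))).sub (((hasDerivAt_id x₂).const_mul 3).mul hE))).mul
      ((hE.pow 2).sub_const (1/4 : ℝ))))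
  refine ⟨_, _, h1, h2, ?_⟩
  simp only [id, Pi.add_apply, Pi.sub_apply, Pi.mul_apply, Pi.div_apply, Pi.pow_apply]
  field_simp
  ring_nf
  field_simp
  ring
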